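/- Let V be a finite-dimensional irreducible module over sl(2,ℂ), and suppose v ∈ V satisfies Hv = λv for some λ ≠ 0, and that neither Ev = 0 nor Fv = 0. Then V ⊗ sl(2,ℂ) is generated, as a Lie submodule, by the element v ⊗ H together with the sl(2,ℂ)-overshears of V ⊗ sl(2,ℂ); that is, the smallest Lie submodule of V ⊗ sl(2,ℂ) containing v ⊗ H and all overshears equals V ⊗ sl(2,ℂ). -/

import Mathlib

open TensorProduct Function

section Aux

variable {L : Type} [LieRing L] [LieAlgebra ℂ L]
variable {V : Type} [AddCommGroup V] [Module ℂ V] [LieRingModule L V] [LieModule ℂ L V]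

/-- Generic weight-shift lemma: if `⁅H,X⁆ = t • X` and `w` is an `H`-eigenvector with
eigenvalue `μ`, then `X^[j] w` is an eigenvector with eigenvalue `μ + t*j`. -/
lemma aux_shift (H X : L) (t : ℂ) (hHX : ⁅H, X⁆ = t • X) (w : V) (μ : ℂ)
    (hw : ⁅H, w⁆ = μ • w) (j : ℕ) :
    ⁅H, (fun z : V => ⁅X, z⁆)^[j] w⁆ = (μ + t * j) • (fun z : V => ⁅X, z⁆)^[j] w := by
  induction j with
  | zero => simpa using hw
  | succ j ih =>
    rw [Function.iterate_succ_apply']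
    have h1 : ⁅H, ⁅X, (fun z : V => ⁅X, z⁆)^[j] w⁆⁆
        = ⁅⁅H, X⁆, (fun z : V => ⁅X, z⁆)^[j] w⁆ + ⁅X, ⁅H, (fun z : V => ⁅X, z⁆)^[j] w⁆⁆ :=
      leibniz_lie H X _
    rw [h1, ih, hHX]
    simp only [smul_lie, lie_smul]
    rw [← add_smul]
    push_cast
    ring_nf

end Aux

section Aux2

variable {L : Type} [LieRing L] [LieAlgebra ℂ L]
variable {V : Type} [AddCommGroup V] [Module ℂ V] [LieRingModule L V] [LieModule ℂ L V]

/-- The fundamental `sl2` relation `e · f^{j+1} u = (j+1)(c-j) f^j u` for a primitive vector. -/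
lemma aux_ef (E F H : L) (hHF : ⁅H, F⁆ = (-2 : ℂ) • F) (hEF : ⁅E, F⁆ = H)
    (u : V) (c : ℂ) (hEu : ⁅E, u⁆ = 0) (hHu : ⁅H, u⁆ = c • u) (j : ℕ) :
    ⁅E, (fun z : V => ⁅F, z⁆)^[j + 1] u⁆
      = (((j : ℂ) + 1) * (c - j)) • (fun z : V => ⁅F, z⁆)^[j] u := by
  induction j with
  | zero =>
    rw [Function.iterate_one]
    have h1 : ⁅E, ⁅F, u⁆⁆ = ⁅⁅E, F⁆, u⁆ + ⁅F, ⁅E, u⁆⁆ := leibniz_lie E F u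
    rw [h1, hEF, hEu, lie_zero, add_zero, hHu]
    norm_num
  | succ j ih =>
    have h1 : ⁅E, ⁅F, (fun z : V => ⁅F, z⁆)^[j + 1] u⁆⁆
        = ⁅⁅E, F⁆, (fun z : V => ⁅F, z⁆)^[j + 1] u⁆
          + ⁅F, ⁅E, (fun z : V => ⁅F, z⁆)^[j + 1] u⁆⁆ := leibniz_lie E F _
    rw [Function.iterate_succ_apply', h1, hEF, ih,
      aux_shift H F (-2 : ℂ) hHF u c hHu (j + 1), lie_smul]
    have h2 : ⁅F, (fun z : V => ⁅F, z⁆)^[j] u⁆ = (fun z : V => ⁅F, z⁆)^[j + 1] u :=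
      (Function.iterate_succ_apply' _ j u).symm
    rw [h2]
    rw [← add_smul]
    push_cast
    ring_nf

end Aux2

section Aux3

variable {L : Type} [LieRing L] [LieAlgebra ℂ L]
variable {V : Type} [AddCommGroup V] [Module ℂ V] [LieRingModule L V] [LieModule ℂ L V]

/-- Any element of `L` is a linear combination of `E`, `F`, `H`. -/
lemma aux_comb (E F H : L) (b : Module.Basis (Fin 3) ℂ L) (hb : ⇑b = ![E, F, H]) (x : L) :
    ∃ a₁ a₂ a₃ : ℂ, x = a₁ • E + a₂ • F + a₃ • H := by
  refine ⟨b.repr x 0, b.repr x 1, b.repr x 2, ?_⟩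
  have h := b.sum_repr x
  rw [Fin.sum_univ_three] at h
  have h0 : b 0 = E := by rw [hb]; rfl
  have h1 : b 1 = F := by rw [hb]; rfl
  have h2 : b 2 = H := by rw [hb]; rfl
  rw [h0, h1, h2] at h
  exact h.symm

/-- For a nonzero primitive vector `u` in an irreducible module, the span of the
`f`-string of `u` is the whole module. -/
lemma aux_span_top (E F H : L) (b : Module.Basis (Fin 3) ℂ L) (hb : ⇑b = ![E, F, H])
    (hHE : ⁅H, E⁆ = (2 : ℂ) • E) (hHF : ⁅H, F⁆ = (-2 : ℂ) • F) (hEF : ⁅E, F⁆ = H)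
    [LieModule.IsIrreducible ℂ L V]
    (u : V) (c : ℂ) (hEu : ⁅E, u⁆ = 0) (hHu : ⁅H, u⁆ = c • u) (hu : u ≠ 0) (w : V) :
    w ∈ Submodule.span ℂ (Set.range fun j => (fun z : V => ⁅F, z⁆)^[j] u) := by
  set P : ℕ → V := fun j => (fun z : V => ⁅F, z⁆)^[j] u with hP
  set S : Submodule ℂ V := Submodule.span ℂ (Set.range P) with hS
  have hmemP : ∀ j, P j ∈ S := fun j => Submodule.subset_span ⟨j, rfl⟩
  -- stability of S under each of E, F, H
  have hFstab : ∀ j, ⁅F, P j⁆ ∈ S := by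
    intro j
    have : ⁅F, P j⁆ = P (j + 1) := (Function.iterate_succ_apply' _ j u).symm
    rw [this]; exact hmemP _
  have hHstab : ∀ j, ⁅H, P j⁆ ∈ S := by
    intro j
    rw [hP, aux_shift H F (-2 : ℂ) hHF u c hHu j]
    exact S.smul_mem _ (hmemP j)
  have hEstab : ∀ j, ⁅E, P j⁆ ∈ S := by
    intro j
    cases j with
    | zero =>
      have h0 : P 0 = u := rfl
      rw [h0, hEu]; exact S.zero_mem
    | succ j =>
      rw [hP, aux_ef E F H hHF hEF u c hEu hHu j]
      exact S.smul_mem _ (hmemP j)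
  have hstab : ∀ (x : L) (m : V), m ∈ S → ⁅x, m⁆ ∈ S := by
    intro x m hm
    obtain ⟨a₁, a₂, a₃, rfl⟩ := aux_comb E F H b hb x
    have key : ∀ (y : L), (∀ j, ⁅y, P j⁆ ∈ S) → ⁅y, m⁆ ∈ S := by
      intro y hy
      induction hm using Submodule.span_induction with
      | mem z hz => obtain ⟨j, rfl⟩ := hz; exact hy j
      | zero => rw [lie_zero]; exact S.zero_mem
      | add z₁ z₂ _ _ h₁ h₂ => rw [lie_add]; exact S.add_mem h₁ h₂
      | smul a z _ h => rw [lie_smul]; exact S.smul_mem a h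
    simp only [add_lie, smul_lie]
    exact S.add_mem (S.add_mem (S.smul_mem _ (key E hEstab)) (S.smul_mem _ (key F hFstab)))
      (S.smul_mem _ (key H hHstab))
  set N : LieSubmodule ℂ L V :=
    { S with lie_mem := fun {x m} hm => hstab x m hm } with hN
  have hNbot : N ≠ ⊥ := by
    intro h
    apply hu
    have : u ∈ N := hmemP 0
    rw [h] at this
    simpa using this
  have hNtop : N = ⊤ := (eq_bot_or_eq_top N).resolve_left hNbot
  have : w ∈ N := by rw [hNtop]; trivial
  exact this

end Aux3

section Aux4

variable {L : Type} [LieRing L] [LieAlgebra ℂ L]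
variable {V : Type} [AddCommGroup V] [Module ℂ V] [LieRingModule L V] [LieModule ℂ L V]

/-- If `w` is an `H`-eigenvector lying in the span of an `H`-eigenvector family whose
eigenvalues all differ from that of `w`, then `w = 0`. -/
lemma aux_zero (H : L) (Q : ℕ → V) (ν : ℕ → ℂ) (hQ : ∀ j, ⁅H, Q j⁆ = ν j • Q j)
    (w : V) (μ : ℂ) (hw : ⁅H, w⁆ = μ • w)
    (hne : ∀ j, μ ≠ ν j) (hmem : w ∈ Submodule.span ℂ (Set.range Q)) : w = 0 := by
  set T : Module.End ℂ V := LieModule.toEnd ℂ L V H with hT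
  have hTapp : ∀ z : V, T z = ⁅H, z⁆ := fun z => rfl
  have hR : Submodule.span ℂ (Set.range Q) ≤ ⨆ ν' ∈ {ν' : ℂ | ν' ≠ μ}, T.eigenspace ν' := by
    rw [Submodule.span_le]
    rintro - ⟨j, rfl⟩
    rcases eq_or_ne (Q j) 0 with h | h
    · rw [h]; exact Submodule.zero_mem _
    · have : Q j ∈ T.eigenspace (ν j) := by
        rw [Module.End.mem_eigenspace_iff, hTapp, hQ]
      exact Submodule.mem_iSup_of_mem (ν j) (Submodule.mem_iSup_of_mem (hne j).symm this)
  have hwe : w ∈ T.eigenspace μ := by rw [Module.End.mem_eigenspace_iff, hTapp, hw]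
  have hdisj : Disjoint (T.eigenspace μ) (⨆ ν' ∈ {ν' : ℂ | ν' ≠ μ}, T.eigenspace ν') := by
    have := T.eigenspaces_iSupIndep μ
    convert this using 2
    all_goals rfl
  have := hdisj.le_bot ⟨hwe, hR hmem⟩
  simpa using this

end Aux4

section Aux5

variable {L : Type} [LieRing L] [LieAlgebra ℂ L]
variable {V : Type} [AddCommGroup V] [Module ℂ V] [LieRingModule L V] [LieModule ℂ L V]

/-- An `H`-eigenvector in the span of an `H`-eigenvector family with pairwise-distinct
eigenvalues is a multiple of the family member with matching eigenvalue. -/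
lemma aux_pick (H : L) (Q : ℕ → V) (ν : ℕ → ℂ) (hQ : ∀ j, ⁅H, Q j⁆ = ν j • Q j)
    (w : V) (μ : ℂ) (hw : ⁅H, w⁆ = μ • w) (k : ℕ) (hk : ν k = μ)
    (hne : ∀ j, j ≠ k → ν j ≠ μ) (hmem : w ∈ Submodule.span ℂ (Set.range Q)) :
    ∃ γ : ℂ, w = γ • Q k := by
  set T : Module.End ℂ V := LieModule.toEnd ℂ L V H with hT
  have hTapp : ∀ z : V, T z = ⁅H, z⁆ := fun z => rfl
  set R : Submodule ℂ V := ⨆ ν' ∈ {ν' : ℂ | ν' ≠ μ}, T.eigenspace ν' with hR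
  have hspan : Submodule.span ℂ (Set.range Q) ≤ (ℂ ∙ Q k) ⊔ R := by
    rw [Submodule.span_le]
    rintro - ⟨j, rfl⟩
    rcases eq_or_ne j k with h | h
    · subst h
      exact Submodule.mem_sup_left (Submodule.mem_span_singleton_self _)
    · rcases eq_or_ne (Q j) 0 with h0 | h0
      · rw [h0]; exact Submodule.zero_mem _
      · refine Submodule.mem_sup_right ?_
        have : Q j ∈ T.eigenspace (ν j) := by
          rw [Module.End.mem_eigenspace_iff, hTapp, hQ]
        exact Submodule.mem_iSup_of_mem (ν j) (Submodule.mem_iSup_of_mem (hne j h) this)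
  have hwe : w ∈ T.eigenspace μ := by rw [Module.End.mem_eigenspace_iff, hTapp, hw]
  obtain ⟨a, ha, r, hr, hsum⟩ := Submodule.mem_sup.mp (hspan hmem)
  obtain ⟨γ, rfl⟩ := Submodule.mem_span_singleton.mp ha
  have hae : γ • Q k ∈ T.eigenspace μ := by
    rw [Module.End.mem_eigenspace_iff, map_smul, hTapp, hQ, hk, smul_comm]
  have hre : r ∈ T.eigenspace μ := by
    have : r = w - γ • Q k := by rw [← hsum]; abel
    rw [this]
    exact Submodule.sub_mem _ hwe hae
  have hdisj : Disjoint (T.eigenspace μ) R := by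
    have := T.eigenspaces_iSupIndep μ
    rw [hR]
    convert this using 2
    all_goals rfl
  have hr0 : r = 0 := by simpa using hdisj.le_bot ⟨hre, hr⟩
  exact ⟨γ, by rw [← hsum, hr0, add_zero]⟩

end Aux5
/-- **Proposition (Tóth–Varolin).**  Let `V` be a finite-dimensional irreducible module over
`sl(2,ℂ)` (presented as a complex Lie algebra `L` with basis `E, F, H` satisfying
`[H,E] = 2E`, `[H,F] = -2F`, `[E,F] = H`), and let `v ∈ V` satisfy `Hv = λv` with `λ ≠ 0`,
`Ev ≠ 0` and `Fv ≠ 0`.  Then the smallest Lie submodule of `V ⊗ L` containing `v ⊗ H` and all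
overshears (the elements `w ⊗ x` with `x·(x·w) = 0`) is all of `V ⊗ L`. -/
theorem sl2_generated_by_vH_and_overshears
    {L : Type} [LieRing L] [LieAlgebra ℂ L]
    (E F H : L) (b : Module.Basis (Fin 3) ℂ L) (hb : ⇑b = ![E, F, H])
    (hHE : ⁅H, E⁆ = (2 : ℂ) • E) (hHF : ⁅H, F⁆ = (-2 : ℂ) • F) (hEF : ⁅E, F⁆ = H)
    {V : Type} [AddCommGroup V] [Module ℂ V] [LieRingModule L V] [LieModule ℂ L V]
    [FiniteDimensional ℂ V] [LieModule.IsIrreducible ℂ L V]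
    (v : V) (lam : ℂ) (hlam : lam ≠ 0) (hv : ⁅H, v⁆ = lam • v)
    (hEv : ⁅E, v⁆ ≠ 0) (hFv : ⁅F, v⁆ ≠ 0) :
    LieSubmodule.lieSpan ℂ L
      (insert (v ⊗ₜ[ℂ] H)
        {z : V ⊗[ℂ] L | ∃ (w : V) (x : L), z = w ⊗ₜ[ℂ] x ∧ ⁅x, ⁅x, w⁆⁆ = (0 : V)}) = ⊤ := by
  classical
  set M := LieSubmodule.lieSpan ℂ L
      (insert (v ⊗ₜ[ℂ] H)
        {z : V ⊗[ℂ] L | ∃ (w : V) (x : L), z = w ⊗ₜ[ℂ] x ∧ ⁅x, ⁅x, w⁆⁆ = (0 : V)}) with hM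
  -- basic membership facts
  have hvH : v ⊗ₜ[ℂ] H ∈ M := LieSubmodule.subset_lieSpan (Set.mem_insert _ _)
  have hover : ∀ (w : V) (x : L), ⁅x, ⁅x, w⁆⁆ = (0 : V) → w ⊗ₜ[ℂ] x ∈ M := fun w x h =>
    LieSubmodule.subset_lieSpan (Set.mem_insert_iff.mpr (Or.inr ⟨w, x, rfl, h⟩))
  have hsub : ∀ a c : V ⊗[ℂ] L, a + c ∈ M → a ∈ M → c ∈ M := by
    intro a c h ha
    have := M.sub_mem h ha
    simpa using this
  have hsmul : ∀ (s : ℂ) (a : V ⊗[ℂ] L), s ≠ 0 → s • a ∈ M → a ∈ M := by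
    intro s a hs h
    have := M.smul_mem s⁻¹ h
    rwa [smul_smul, inv_mul_cancel₀ hs, one_smul] at this
  have hv0 : v ≠ 0 := by rintro rfl; exact hEv (lie_zero E)
  -- the `E`-string of `v` terminates
  have hexists : ∃ j : ℕ, (fun z : V => ⁅E, z⁆)^[j + 1] v = 0 := by
    by_contra hcon
    push_neg at hcon
    have hall : ∀ j : ℕ, (fun z : V => ⁅E, z⁆)^[j] v ≠ 0 := by
      intro j
      cases j with
      | zero => simpa using hv0
      | succ j => exact hcon j
    set T : Module.End ℂ V := LieModule.toEnd ℂ L V H with hT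
    set d := Module.finrank ℂ V with hd
    have hinj : Function.Injective (fun i : Fin (d + 1) => lam + 2 * ((i : ℕ) : ℂ)) := by
      intro i i' h
      simp only [add_right_injective, mul_right_injective₀] at h
      have : ((i : ℕ) : ℂ) = ((i' : ℕ) : ℂ) := by
        field_simp at h
        exact_mod_cast (by simpa using h : (i : ℕ) = (i' : ℕ))
      exact Fin.ext (by exact_mod_cast this)
    have heig : ∀ i : Fin (d + 1),
        T.HasEigenvector (lam + 2 * ((i : ℕ) : ℂ)) ((fun z : V => ⁅E, z⁆)^[(i : ℕ)] v) := by
      intro i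
      constructor
      · rw [Module.End.mem_eigenspace_iff]
        exact aux_shift H E (2 : ℂ) hHE v lam hv (i : ℕ)
      · exact hall _
    have hli := Module.End.eigenvectors_linearIndependent' T _ hinj _ heig
    have := hli.fintype_card_le_finrank
    simp only [Fintype.card_fin] at this
    omega
  set k := Nat.find hexists with hk
  have hk1 : (fun z : V => ⁅E, z⁆)^[k + 1] v = 0 := Nat.find_spec hexists
  have hk2 : (fun z : V => ⁅E, z⁆)^[k] v ≠ 0 := by
    cases hkc : k with
    | zero => simpa using hv0
    | succ j =>
      have := Nat.find_min hexists (by omega : j < k)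
      simpa using this
  have hkpos : 1 ≤ k := by
    rcases Nat.eq_zero_or_pos k with h | h
    · exfalso
      apply hEv
      have := hk1
      rw [h] at this
      simpa using this
    · exact h
  set u : V := (fun z : V => ⁅E, z⁆)^[k] v with hu
  have hu0 : u ≠ 0 := hk2
  have hEu : ⁅E, u⁆ = 0 := by
    have h2 : ⁅E, (fun z : V => ⁅E, z⁆)^[k] v⁆ = (fun z : V => ⁅E, z⁆)^[k + 1] v :=
      (Function.iterate_succ_apply' _ k v).symm
    rw [hu, h2]
    exact hk1
  set c : ℂ := lam + 2 * k with hc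
  have hHu : ⁅H, u⁆ = c • u := aux_shift H E (2 : ℂ) hHE v lam hv k
  -- the `F`-string of `u`
  set P : ℕ → V := fun j => (fun z : V => ⁅F, z⁆)^[j] u with hP
  set ν : ℕ → ℂ := fun j => c + (-2) * j with hν
  have hHP : ∀ j, ⁅H, P j⁆ = ν j • P j := fun j => aux_shift H F (-2 : ℂ) hHF u c hHu j
  have hEP : ∀ j, ⁅E, P (j + 1)⁆ = (((j : ℂ) + 1) * (c - j)) • P j :=
    fun j => aux_ef E F H hHF hEF u c hEu hHu j
  have hFP : ∀ j, ⁅F, P j⁆ = P (j + 1) := fun j => (Function.iterate_succ_apply' _ j u).symm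
  have hspan : ∀ w : V, w ∈ Submodule.span ℂ (Set.range P) :=
    aux_span_top E F H b hb hHE hHF hEF u c hEu hHu hu0
  -- v is a multiple of P k
  have hvPk : ∃ γ : ℂ, v = γ • P k := by
    apply aux_pick H P ν hHP v lam hv k
    · rw [hν, hc]; push_cast; ring
    · intro j hj h
      apply hj
      rw [hν, hc] at h
      have h2 : (2 : ℂ) * j = 2 * k := by linear_combination -h
      field_simp at h2
      exact_mod_cast h2
    · exact hspan v
  obtain ⟨γ, hγ⟩ := hvPk
  have hγ0 : γ ≠ 0 := by rintro rfl; rw [zero_smul] at hγ; exact hv0 hγ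
  -- brackets of `F` and `H` the other way around
  have hFE : ⁅F, E⁆ = -H := by rw [← lie_skew, hEF]
  have hFH : ⁅F, H⁆ = (2 : ℂ) • F := by
    rw [← lie_skew, hHF]; simp
  have hEH : ⁅E, H⁆ = (-2 : ℂ) • E := by
    rw [← lie_skew, hHE]; simp
  -- step 1 : P 0 ⊗ E and P 1 ⊗ E are overshears
  have m1 : P 0 ⊗ₜ[ℂ] E ∈ M := by
    apply hover
    have h0 : P 0 = u := rfl
    rw [h0, hEu, lie_zero]
  have m2 : P 1 ⊗ₜ[ℂ] E ∈ M := by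
    apply hover
    rw [hEP 0, lie_smul]
    have h0 : P 0 = u := rfl
    rw [h0, hEu, smul_zero]
  -- step 2 : u ⊗ H ∈ M
  have m3 : P 0 ⊗ₜ[ℂ] H ∈ M := by
    have hb1 : ⁅F, P 0 ⊗ₜ[ℂ] E⁆ = P 1 ⊗ₜ[ℂ] E + (-1 : ℂ) • (P 0 ⊗ₜ[ℂ] H) := by
      rw [LieModule.lie_tmul_right, hFP 0, hFE]
      rw [show (-H : L) = (-1 : ℂ) • H by simp, tmul_smul]
    have h2 : P 1 ⊗ₜ[ℂ] E + (-1 : ℂ) • (P 0 ⊗ₜ[ℂ] H) ∈ M := hb1 ▸ M.lie_mem m1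
    have h3 : (-1 : ℂ) • (P 0 ⊗ₜ[ℂ] H) ∈ M := hsub _ _ h2 m2
    exact hsmul (-1 : ℂ) _ (by norm_num) h3
  -- step 3 : the descending family P (j+1) ⊗ H + (2j+2) • (P j ⊗ F)
  have m4 : ∀ j : ℕ, P (j + 1) ⊗ₜ[ℂ] H + ((2 * j + 2 : ℂ)) • (P j ⊗ₜ[ℂ] F) ∈ M := by
    intro j
    induction j with
    | zero =>
      have hb1 : ⁅F, P 0 ⊗ₜ[ℂ] H⁆ = P 1 ⊗ₜ[ℂ] H + (2 : ℂ) • (P 0 ⊗ₜ[ℂ] F) := by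
        rw [LieModule.lie_tmul_right, hFP 0, hFH, tmul_smul]
      have := hb1 ▸ M.lie_mem (x := F) m3
      convert this using 3
      norm_num
    | succ j ih =>
      have hb1 : ⁅F, P (j + 1) ⊗ₜ[ℂ] H + ((2 * j + 2 : ℂ)) • (P j ⊗ₜ[ℂ] F)⁆
          = P (j + 2) ⊗ₜ[ℂ] H + ((2 * (j + 1) + 2 : ℂ)) • (P (j + 1) ⊗ₜ[ℂ] F) := by
        rw [lie_add, lie_smul, LieModule.lie_tmul_right, LieModule.lie_tmul_right,
          hFP (j + 1), hFP j, hFH, lie_self, tmul_zero, add_zero, tmul_smul]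
        have e2 : P (j + 1 + 1) = P (j + 2) := rfl
        rw [e2]
        module
      have := hb1 ▸ M.lie_mem (x := F) ih
      convert this using 2
      push_cast
      ring_nf
      exact Iff.rfl
  -- step 4 : P k ⊗ H ∈ M
  have m5 : P k ⊗ₜ[ℂ] H ∈ M := by
    apply hsmul γ _ hγ0
    rw [smul_tmul', ← hγ]
    exact hvH
  -- step 5 : P (k-1) ⊗ F ∈ M and P k ⊗ F ∈ M
  obtain ⟨k0, hk0⟩ : ∃ k0, k = k0 + 1 := ⟨k - 1, by omega⟩
  have m6 : P k0 ⊗ₜ[ℂ] F ∈ M := by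
    have h1 := m4 k0
    rw [← hk0] at h1
    have h2 : ((2 * k0 + 2 : ℂ)) • (P k0 ⊗ₜ[ℂ] F) ∈ M := by
      refine hsub _ _ ?_ m5
      convert h1 using 2
    refine hsmul _ _ ?_ h2
    have : (0 : ℝ) < 2 * k0 + 2 := by positivity
    intro hcon
    rw [show ((2 * k0 + 2 : ℂ)) = ((2 * k0 + 2 : ℕ) : ℂ) by push_cast; ring] at hcon
    exact_mod_cast hcon
  have m7 : P k ⊗ₜ[ℂ] F ∈ M := by
    have hb1 : ⁅F, P k0 ⊗ₜ[ℂ] F⁆ = P k ⊗ₜ[ℂ] F := by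
      rw [LieModule.lie_tmul_right, hFP k0, lie_self, tmul_zero, add_zero, ← hk0]
    exact hb1 ▸ M.lie_mem m6
  -- step 6 : P (k+1) ⊗ H ∈ M
  have m8 : P (k + 1) ⊗ₜ[ℂ] H ∈ M := by
    have hb1 : ⁅F, P k ⊗ₜ[ℂ] H⁆ = P (k + 1) ⊗ₜ[ℂ] H + (2 : ℂ) • (P k ⊗ₜ[ℂ] F) := by
      rw [LieModule.lie_tmul_right, hFP k, hFH, tmul_smul]
    have h2 := hb1 ▸ M.lie_mem (x := F) m5
    have h3 : P (k + 1) ⊗ₜ[ℂ] H ∈ M := by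
      have h4 : (2 : ℂ) • (P k ⊗ₜ[ℂ] F) ∈ M := M.smul_mem _ m7
      have h5 : (2 : ℂ) • (P k ⊗ₜ[ℂ] F) + P (k + 1) ⊗ₜ[ℂ] H ∈ M := by
        rw [add_comm]; exact h2
      exact hsub _ _ h5 h4
    exact h3
  -- step 7 : P (k+1) ⊗ E ∈ M
  have m9 : P (k + 1) ⊗ₜ[ℂ] E ∈ M := by
    have hb1 : ⁅E, P (k + 1) ⊗ₜ[ℂ] H⁆
        = (((k : ℂ) + 1) * (c - k)) • (P k ⊗ₜ[ℂ] H) + (-2 : ℂ) • (P (k + 1) ⊗ₜ[ℂ] E) := by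
      rw [LieModule.lie_tmul_right, hEP k, hEH]
      simp only [tmul_smul, ← smul_tmul']
    have h2 := hb1 ▸ M.lie_mem (x := E) m8
    have h3 : (-2 : ℂ) • (P (k + 1) ⊗ₜ[ℂ] E) ∈ M :=
      hsub _ _ h2 (M.smul_mem _ m5)
    exact hsmul _ _ (by norm_num) h3
  -- step 8 : c ≠ k
  have m10 : c ≠ (k : ℂ) := by
    intro hck
    set z : V := P (k + 1) with hz
    have hz0 : z ≠ 0 := by
      intro h0
      apply hFv
      rw [hγ, lie_smul, hFP k, ← hz, h0, smul_zero]
    have hEz : ⁅E, z⁆ = 0 := by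
      rw [hz, hEP k, hck]
      simp
    have hHz : ⁅H, z⁆ = ν (k + 1) • z := hHP (k + 1)
    have hspanz := aux_span_top E F H b hb hHE hHF hEF z (ν (k + 1)) hEz hHz hz0 u
    have hu00 : u = 0 := by
      apply aux_zero H (fun j => (fun w : V => ⁅F, w⁆)^[j] z)
        (fun j => ν (k + 1) + (-2) * j)
        (fun j => aux_shift H F (-2 : ℂ) hHF z (ν (k + 1)) hHz j) u c hHu _ hspanz
      intro j h
      rw [hν] at h
      have : (2 : ℂ) * (k + 1) + 2 * j = 0 := by push_cast at h ⊢; linear_combination h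
      have h2 : ((2 * (k + 1) + 2 * j : ℕ) : ℂ) = 0 := by push_cast; linear_combination this
      have h3 : (2 * (k + 1) + 2 * j : ℕ) = 0 := by exact_mod_cast h2
      omega
    exact hu0 hu00
  -- step 9 : P k ⊗ E ∈ M, and the three tensors of v
  have m11 : P k ⊗ₜ[ℂ] E ∈ M := by
    have hb1 : ⁅E, P (k + 1) ⊗ₜ[ℂ] E⁆ = (((k : ℂ) + 1) * (c - k)) • (P k ⊗ₜ[ℂ] E) := by
      rw [LieModule.lie_tmul_right, hEP k, lie_self, tmul_zero, add_zero, smul_tmul']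
    have h2 := hb1 ▸ M.lie_mem (x := E) m9
    refine hsmul _ _ ?_ h2
    apply mul_ne_zero
    · intro hcon
      have : ((k + 1 : ℕ) : ℂ) = 0 := by push_cast; linear_combination hcon
      have h3 : (k + 1 : ℕ) = 0 := by exact_mod_cast this
      omega
    · intro hcon
      apply m10
      linear_combination hcon
  have mvE : v ⊗ₜ[ℂ] E ∈ M := by
    rw [hγ, ← smul_tmul']
    exact M.smul_mem _ m11
  have mvF : v ⊗ₜ[ℂ] F ∈ M := by
    rw [hγ, ← smul_tmul']
    exact M.smul_mem _ m7
  have mvH : v ⊗ₜ[ℂ] H ∈ M := hvH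
  -- the set of w all of whose basic tensors lie in M is a Lie submodule
  set U₀ : Submodule ℂ V :=
    { carrier := {w : V | w ⊗ₜ[ℂ] E ∈ M ∧ w ⊗ₜ[ℂ] F ∈ M ∧ w ⊗ₜ[ℂ] H ∈ M}
      add_mem' := by
        intro w₁ w₂ h₁ h₂
        refine ⟨?_, ?_, ?_⟩ <;> rw [add_tmul]
        · exact M.add_mem h₁.1 h₂.1
        · exact M.add_mem h₁.2.1 h₂.2.1
        · exact M.add_mem h₁.2.2 h₂.2.2
      zero_mem' := by
        refine ⟨?_, ?_, ?_⟩ <;> rw [zero_tmul] <;> exact M.zero_mem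
      smul_mem' := by
        intro s w h
        refine ⟨?_, ?_, ?_⟩ <;> rw [← smul_tmul']
        · exact M.smul_mem s h.1
        · exact M.smul_mem s h.2.1
        · exact M.smul_mem s h.2.2 } with hU₀
  have hallU : ∀ w ∈ U₀, ∀ y : L, w ⊗ₜ[ℂ] y ∈ M := by
    intro w hw y
    obtain ⟨a₁, a₂, a₃, rfl⟩ := aux_comb E F H b hb y
    rw [tmul_add, tmul_add, tmul_smul, tmul_smul, tmul_smul]
    exact M.add_mem (M.add_mem (M.smul_mem _ hw.1) (M.smul_mem _ hw.2.1)) (M.smul_mem _ hw.2.2)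
  set U : LieSubmodule ℂ L V :=
    { U₀ with
      lie_mem := by
        intro x w hw
        have key : ∀ y : L, ⁅x, w⁆ ⊗ₜ[ℂ] y ∈ M := by
          intro y
          have h1 : ⁅x, w ⊗ₜ[ℂ] y⁆ = ⁅x, w⁆ ⊗ₜ[ℂ] y + w ⊗ₜ[ℂ] ⁅x, y⁆ :=
            LieModule.lie_tmul_right x w y
          have h2 : ⁅x, w⁆ ⊗ₜ[ℂ] y + w ⊗ₜ[ℂ] ⁅x, y⁆ ∈ M := h1 ▸ M.lie_mem (hallU w hw y)
          have h3 : w ⊗ₜ[ℂ] ⁅x, y⁆ ∈ M := hallU w hw _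
          have h4 := M.sub_mem h2 h3
          simpa using h4
        exact ⟨key E, key F, key H⟩ } with hU
  have hvU : v ∈ U := ⟨mvE, mvF, mvH⟩
  have hUtop : U = ⊤ := by
    refine (eq_bot_or_eq_top U).resolve_left ?_
    intro h
    rw [h] at hvU
    exact hv0 (by simpa using hvU)
  -- conclude
  have hall : ∀ (w : V) (y : L), w ⊗ₜ[ℂ] y ∈ M := by
    intro w y
    have hwU : w ∈ U := by rw [hUtop]; trivial
    exact hallU w hwU y
  rw [← LieSubmodule.toSubmodule_eq_top]
  rw [eq_top_iff, ← TensorProduct.span_tmul_eq_top ℂ V L]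
  refine Submodule.span_le.mpr ?_
  rintro t ⟨w, y, rfl⟩
  exact hall w y
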